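/- Let g be a Lie algebra with trivial center and suppose x·y = [φ(x),y] defines a CPA-structure on g for some linear map φ : g → g. Then φ is a Lie algebra homomorphism. -/
import Mathlib

/-- If `g` has trivial center and `x·y = ⁅φ(x), y⁆` is a CPA-structure for a linear map `φ`,
then `φ` is a Lie algebra homomorphism. -/
theorem inner_cpa_phi_is_hom
    (K : Type*) [Field K] (L : Type*) [LieRing L] [LieAlgebra K L]
    (hZ : LieAlgebra.center K L = ⊥)
    (φ : L →ₗ[K] L)
    (hcomm : ∀ x y : L, ⁅φ x, y⁆ = ⁅φ y, x⁆)
    (hpost : ∀ x y z : L, ⁅φ ⁅x, y⁆, z⁆ = ⁅φ x, ⁅φ y, z⁆⁆ - ⁅φ y, ⁅φ x, z⁆⁆)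
    (hder : ∀ x y z : L, ⁅φ x, ⁅y, z⁆⁆ = ⁅⁅φ x, y⁆, z⁆ + ⁅y, ⁅φ x, z⁆⁆) :
    ∀ x y : L, φ ⁅x, y⁆ = ⁅φ x, φ y⁆ := by
  intro x y
  have key : ∀ z : L, ⁅φ ⁅x, y⁆ - ⁅φ x, φ y⁆, z⁆ = 0 := by
    intro z
    rw [sub_lie, hpost, leibniz_lie]
    abel
  have hc : (φ ⁅x, y⁆ - ⁅φ x, φ y⁆) ∈ LieAlgebra.center K L := by
    intro z
    rw [← lie_skew, key, neg_zero]
  rw [hZ] at hc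
  have := (LieSubmodule.mem_bot (R := K) (L := L) _).mp hc
  exact sub_eq_zero.mp this
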